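/- A subsemigroup M of IC_n is maximal (proper, and contained in no proper subsemigroup other than itself) if and only if M = IC_n \ {γ}, where γ is one of: the identity map id_{[n]}; a partial identity ε_{[n]\{i}} with domain [n]\{i} for some 1 ≤ i ≤ n; or the essential element ε_{i,i+1} for some 1 ≤ i ≤ n−1, where ε_{i,i+1} has domain [n]\{i}, maps i+1 to i, and fixes every other point of its domain. Consequently, IC_n has exactly 2n maximal subsemigroups. -/

import Mathlib

open scoped Classical

namespace ICCatalan

/-- Partial injective transformations on `Fin n` (representing the chain `[n] = {1,…,n}`). -/
abbrev PT (n : ℕ) := Fin n ≃. Fin n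

/-- Composition (left-to-right, `x(αβ) = (xα)β`) makes `PT n` a monoid. -/
noncomputable instance instMonoidPT (n : ℕ) : Monoid (PT n) where
  mul f g := f.trans g
  one := PEquiv.refl (Fin n)
  mul_assoc := PEquiv.trans_assoc
  one_mul := PEquiv.refl_trans
  mul_one := PEquiv.trans_refl

lemma mul_def {n : ℕ} (f g : PT n) : f * g = f.trans g := rfl

/-- The domain of a partial transformation. -/
def pdom {n : ℕ} (f : PT n) : Set (Fin n) := {x | ∃ y, f x = some y}

/-- The image of a partial transformation. -/
def pim {n : ℕ} (f : PT n) : Set (Fin n) := {y | ∃ x, f x = some y}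

/-- The height `|im f|` of a partial transformation. -/
noncomputable def height {n : ℕ} (f : PT n) : ℕ := (pim f).ncard

/-- `f` is order-decreasing: `xf ≤ x` on the domain. -/
def IsDecr {n : ℕ} (f : PT n) : Prop := ∀ x y : Fin n, f x = some y → y ≤ x

/-- `f` is isotone: `x ≤ y` implies `xf ≤ yf` on the domain. -/
def IsIso {n : ℕ} (f : PT n) : Prop :=
  ∀ x₁ x₂ y₁ y₂ : Fin n, f x₁ = some y₁ → f x₂ = some y₂ → x₁ ≤ x₂ → y₁ ≤ y₂

/-- The injective partial Catalan monoid `IC_n`: all isotone order-decreasing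
partial injective transformations of `[n]`. -/
def IC (n : ℕ) : Set (PT n) := {f | IsIso f ∧ IsDecr f}

/-- `Q'_n = {α ∈ IC_n : 1 ∉ dom α}` (the least element of `Fin n` plays the role of `1 ∈ [n]`). -/
def Qp (n : ℕ) : Set (PT n) := {f | f ∈ IC n ∧ ∀ x : Fin n, (x : ℕ) = 0 → f x = none}

/-- `S¹ : S` with an identity adjoined (realized inside `PT n`). -/
def SOne {n : ℕ} (S : Set (PT n)) : Set (PT n) := S ∪ {1}

/-- The starred Green relation `L*` of the subsemigroup `S`. -/
def LStar {n : ℕ} (S : Set (PT n)) (a b : PT n) : Prop :=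
  ∀ x ∈ SOne S, ∀ y ∈ SOne S, (a * x = a * y ↔ b * x = b * y)

/-- The starred Green relation `R*` of the subsemigroup `S`. -/
def RStar {n : ℕ} (S : Set (PT n)) (a b : PT n) : Prop :=
  ∀ x ∈ SOne S, ∀ y ∈ SOne S, (x * a = y * a ↔ x * b = y * b)

/-- The starred Green relation `H* = L* ∩ R*`. -/
def HStar {n : ℕ} (S : Set (PT n)) (a b : PT n) : Prop :=
  LStar S a b ∧ RStar S a b

/-- The partial identity on a subset `A` of `[n]`. -/
noncomputable def pid {n : ℕ} (A : Set (Fin n)) : PT n := PEquiv.ofSet A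

/-- An essential element: exactly one point `y` of the domain is moved, and `yf = y - 1`. -/
def IsEssential {n : ℕ} (f : PT n) : Prop :=
  ∃ y z : Fin n, f y = some z ∧ (z : ℕ) + 1 = (y : ℕ) ∧
    ∀ x w : Fin n, f x = some w → w ≠ x → x = y

/-- The shift of `f`: the number of non-fixed points of its domain. -/
noncomputable def shift {n : ℕ} (f : PT n) : ℕ := {x : Fin n | ∃ w, f x = some w ∧ w ≠ x}.ncard


/-- `M` is a subsemigroup of `S`. -/
def IsSubsgp {n : ℕ} (S M : Set (PT n)) : Prop :=
  M ⊆ S ∧ ∀ a ∈ M, ∀ b ∈ M, a * b ∈ M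

/-- `M` is a maximal subsemigroup of `S`: a proper nonempty subsemigroup contained in
no subsemigroup of `S` other than itself and `S`. -/
def IsMaxSubsgp {n : ℕ} (S M : Set (PT n)) : Prop :=
  IsSubsgp S M ∧ M.Nonempty ∧ M ≠ S ∧
    ∀ T : Set (PT n), IsSubsgp S T → M ⊆ T → T = M ∨ T = S

section Aux

variable {n : ℕ}

lemma mul_apply (f g : PT n) (x : Fin n) : (f * g) x = (f x).bind g := rfl

lemma one_apply (x : Fin n) : (1 : PT n) x = some x := rfl

lemma pid_apply (A : Set (Fin n)) (x : Fin n) :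
    pid A x = if x ∈ A then some x else none := rfl

lemma pt_inj {f : PT n} {a b x : Fin n} (h1 : f a = some x) (h2 : f b = some x) : a = b :=
  f.inj (Option.mem_def.2 h1) (Option.mem_def.2 h2)

/-- The essential element `ε_{i,i+1}`. -/
noncomputable def eMap (i : Fin n) (hi : (i : ℕ) + 1 < n) : PT n where
  toFun x := if (x : ℕ) = (i : ℕ) then none
    else if (x : ℕ) = (i : ℕ) + 1 then some i else some x
  invFun y := if (y : ℕ) = (i : ℕ) + 1 then none
    else if (y : ℕ) = (i : ℕ) then some ⟨(i : ℕ) + 1, hi⟩ else some y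
  inv a b := by
    split_ifs with h1 h2 h3 h4 <;>
      simp_all [Option.mem_def, Fin.ext_iff] <;> omega

lemma e_apply (i : Fin n) (hi : (i : ℕ) + 1 < n) (x : Fin n) :
    eMap i hi x = if (x : ℕ) = (i : ℕ) then none
      else if (x : ℕ) = (i : ℕ) + 1 then some i else some x := rfl

lemma esymm_apply (i : Fin n) (hi : (i : ℕ) + 1 < n) (y : Fin n) :
    (eMap i hi).symm y = if (y : ℕ) = (i : ℕ) + 1 then none
      else if (y : ℕ) = (i : ℕ) then some ⟨(i : ℕ) + 1, hi⟩ else some y := rfl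

lemma one_mem_IC : (1 : PT n) ∈ IC n := by
  constructor
  · intro x₁ x₂ y₁ y₂ h1 h2 hle
    rw [one_apply, Option.some_inj] at h1 h2; subst h1; subst h2; exact hle
  · intro x y h
    rw [one_apply, Option.some_inj] at h; subst h; exact le_rfl

lemma bot_mem_IC : (⊥ : PT n) ∈ IC n := by
  constructor
  · intro x₁ x₂ y₁ y₂ h1 _ _; rw [PEquiv.bot_apply] at h1; cases h1
  · intro x y h; rw [PEquiv.bot_apply] at h; cases h

lemma pid_mem_IC (A : Set (Fin n)) : pid A ∈ IC n := by
  constructor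
  · intro x₁ x₂ y₁ y₂ h1 h2 hle
    rw [pid_apply] at h1 h2
    split_ifs at h1 h2
    rw [Option.some_inj] at h1 h2; subst h1; subst h2; exact hle
  · intro x y h
    rw [pid_apply] at h; split_ifs at h
    rw [Option.some_inj] at h; subst h; exact le_rfl

lemma e_mem_IC (i : Fin n) (hi : (i : ℕ) + 1 < n) : eMap i hi ∈ IC n := by
  constructor
  · intro x₁ x₂ y₁ y₂ h1 h2 hle
    rw [e_apply] at h1 h2
    rw [Fin.le_def] at hle ⊢
    split_ifs at h1 h2 <;> rw [Option.some_inj] at h1 h2 <;>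
      subst h1 <;> subst h2 <;> omega
  · intro x y h
    rw [e_apply] at h
    rw [Fin.le_def]
    split_ifs at h <;> rw [Option.some_inj] at h <;> subst h <;> omega

lemma IC_mul {α β : PT n} (hα : α ∈ IC n) (hβ : β ∈ IC n) : α * β ∈ IC n := by
  constructor
  · intro x₁ x₂ y₁ y₂ h1 h2 hle
    rw [mul_apply, Option.bind_eq_some_iff] at h1 h2
    obtain ⟨u₁, hu₁, hv₁⟩ := h1
    obtain ⟨u₂, hu₂, hv₂⟩ := h2
    exact hβ.1 u₁ u₂ y₁ y₂ hv₁ hv₂ (hα.1 x₁ x₂ u₁ u₂ hu₁ hu₂ hle)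
  · intro x y h
    rw [mul_apply, Option.bind_eq_some_iff] at h
    obtain ⟨u, hu, hv⟩ := h
    exact le_trans (hβ.2 u y hv) (hα.2 x u hu)

end Aux
section Irred

variable {n : ℕ}

lemma fix_of_comp {α β : PT n} (hα : IsDecr α) (hβ : IsDecr β) {x : Fin n}
    (h : (α * β) x = some x) : α x = some x ∧ β x = some x := by
  rw [mul_apply, Option.bind_eq_some_iff] at h
  obtain ⟨u, hu, hbu⟩ := h
  have h1 : u ≤ x := hα x u hu
  have h2 : x ≤ u := hβ u x hbu
  have : u = x := le_antisymm h1 h2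
  subst this
  exact ⟨hu, hbu⟩

lemma irr_one {α β : PT n} (hα : α ∈ IC n) (hβ : β ∈ IC n) (h : α * β = 1) :
    α = 1 ∨ β = 1 := by
  have key : ∀ x, α x = some x ∧ β x = some x := by
    intro x
    exact fix_of_comp hα.2 hβ.2 (by rw [h, one_apply])
  right
  ext x
  rw [(key x).2, one_apply]

lemma irr_pid {α β : PT n} (i : Fin n) (hα : α ∈ IC n) (hβ : β ∈ IC n)
    (h : α * β = pid {i}ᶜ) : α = pid {i}ᶜ ∨ β = pid {i}ᶜ := by
  have key : ∀ x, x ≠ i → α x = some x ∧ β x = some x := by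
    intro x hx
    refine fix_of_comp hα.2 hβ.2 ?_
    rw [h, pid_apply, if_pos (by simpa using hx)]
  have hnone : (α * β) i = none := by rw [h, pid_apply, if_neg (by simp)]
  rcases hw : α i with _ | w
  · left
    ext x
    rw [pid_apply]
    by_cases hx : x = i
    · subst hx; rw [if_neg (by simp), hw]
    · rw [if_pos (by simpa using hx), (key x hx).1]
  · -- α i = some w; show w = i, then β = pid {i}ᶜ
    have hwi : w = i := by
      by_contra hne
      have hlt : w ≠ i := hne
      have : α w = some w := (key w hlt).1
      exact hne (pt_inj this hw ▸ rfl)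
    subst hwi
    right
    have hβi : β w = none := by
      rw [mul_apply, hw] at hnone
      simpa using hnone
    ext x
    rw [pid_apply]
    by_cases hx : x = w
    · subst hx; rw [if_neg (by simp), hβi]
    · rw [if_pos (by simpa using hx), (key x hx).2]

lemma irr_e {α β : PT n} (i : Fin n) (hi : (i : ℕ) + 1 < n)
    (hα : α ∈ IC n) (hβ : β ∈ IC n) (h : α * β = eMap i hi) :
    α = eMap i hi ∨ β = eMap i hi := by
  set i' : Fin n := ⟨(i : ℕ) + 1, hi⟩ with hi'def
  have hii' : i ≠ i' := by simp [hi'def, Fin.ext_iff]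
  have key : ∀ x : Fin n, (x : ℕ) ≠ (i : ℕ) → (x : ℕ) ≠ (i : ℕ) + 1 →
      α x = some x ∧ β x = some x := by
    intro x h1 h2
    refine fix_of_comp hα.2 hβ.2 ?_
    rw [h, e_apply, if_neg h1, if_neg h2]
  have hnone : (α * β) i = none := by rw [h, e_apply, if_pos rfl]
  have hmove : (α * β) i' = some i := by
    rw [h, e_apply, if_neg (by simp [hi'def]), if_pos (by simp [hi'def])]
  rw [mul_apply, Option.bind_eq_some_iff] at hmove
  obtain ⟨u, hu, hbu⟩ := hmove
  have hu1 : u ≤ i' := hα.2 i' u hu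
  have hu2 : i ≤ u := hβ.2 u i hbu
  have hucase : u = i ∨ u = i' := by
    rw [Fin.le_def] at hu1 hu2
    rcases Nat.lt_or_ge (u : ℕ) ((i : ℕ) + 1) with hc | hc
    · left; exact Fin.ext (by simp [hi'def] at hu1 ⊢; omega)
    · right; exact Fin.ext (by simp [hi'def] at hu1 ⊢; omega)
  rcases hucase with he | he
  · -- α i' = some i, so α = eMap i hi
    rw [he] at hu hbu
    left
    have hαi : α i = none := by
      rcases hwi : α i with _ | w
      · rfl
      · exfalso
        have hw1 : w ≤ i := hα.2 i w hwi
        have hw2 : w ≠ i := by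
          intro hcontra
          subst hcontra
          exact hii' (pt_inj hwi hu)
        have hwlt : (w : ℕ) < (i : ℕ) := lt_of_le_of_ne (Fin.le_def.1 hw1) (by
          intro hc; exact hw2 (Fin.ext hc))
        have : α w = some w := (key w (by omega) (by omega)).1
        exact hw2 (pt_inj this hwi)
    ext x
    rw [e_apply]
    by_cases h1 : (x : ℕ) = (i : ℕ)
    · have : x = i := Fin.ext h1
      subst this
      rw [if_pos rfl, hαi]
    by_cases h2 : (x : ℕ) = (i : ℕ) + 1
    · have : x = i' := Fin.ext (by simp [hi'def, h2])
      subst this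
      rw [if_neg h1, if_pos h2, hu]
    · rw [if_neg h1, if_neg h2, (key x h1 h2).1]
  · -- α i' = some i', β i' = some i
    rw [he] at hu hbu
    right
    have hβi' : β i' = some i := hbu
    have hβi : β i = none := by
      rcases hvi : β i with _ | v
      · rfl
      · exfalso
        have hv1 : v ≤ i := hβ.2 i v hvi
        have hv2 : v ≠ i := by
          intro hc; subst hc
          exact hii' (pt_inj hvi hβi' ▸ rfl)
        have hvlt : (v : ℕ) < (i : ℕ) := lt_of_le_of_ne (Fin.le_def.1 hv1) (by
          intro hc; exact hv2 (Fin.ext hc))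
        have : β v = some v := (key v (by omega) (by omega)).2
        exact hv2 (pt_inj this hvi)
    ext x
    rw [e_apply]
    by_cases h1 : (x : ℕ) = (i : ℕ)
    · have : x = i := Fin.ext h1
      subst this
      rw [if_pos rfl, hβi]
    by_cases h2 : (x : ℕ) = (i : ℕ) + 1
    · have : x = i' := Fin.ext (by simp [hi'def, h2])
      subst this
      rw [if_neg h1, if_pos h2, hβi']
    · rw [if_neg h1, if_neg h2, (key x h1 h2).2]

end Irred
section Gen

variable {n : ℕ}

/-- Measure: total displacement. -/
noncomputable def msr (f : PT n) : ℕ :=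
  ∑ x : Fin n, ((x : ℕ) - ((f x).map Fin.val).getD (x : ℕ))

lemma pid_insert_step (A : Set (Fin n)) (i : Fin n) (hi : i ∉ A) :
    pid A = pid (insert i A) * pid {i}ᶜ := by
  ext x
  rw [mul_apply, pid_apply]
  by_cases hx : x = i
  · subst hx
    rw [if_neg hi, pid_apply, if_pos (Set.mem_insert _ _)]
    simp [pid_apply]
  · rw [pid_apply]
    by_cases hA : x ∈ A
    · rw [if_pos hA, if_pos (Set.mem_insert_of_mem _ hA)]
      simp [pid_apply, hx]
    · rw [if_neg hA, if_neg (by simp [hx, hA])]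
      simp

lemma pid_mem_of_gens {T : Set (PT n)} (hmul : ∀ a ∈ T, ∀ b ∈ T, a * b ∈ T)
    (h1 : (1 : PT n) ∈ T) (hpid : ∀ i : Fin n, pid {i}ᶜ ∈ T) (A : Set (Fin n)) :
    pid A ∈ T := by
  have key : ∀ k : ℕ, ∀ A : Set (Fin n), Aᶜ.ncard ≤ k → pid A ∈ T := by
    intro k
    induction k with
    | zero =>
      intro A hA
      have h0 : Aᶜ.ncard = 0 := Nat.le_zero.1 hA
      have : Aᶜ = ∅ := (Set.ncard_eq_zero (Set.toFinite _)).1 h0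
      have hAu : A = Set.univ := by
        rw [← Set.compl_empty_iff]; exact this
      subst hAu
      have : pid (Set.univ : Set (Fin n)) = 1 := by
        ext x; rw [pid_apply, if_pos (Set.mem_univ _), one_apply]
      rw [this]; exact h1
    | succ k ih =>
      intro A hA
      rcases Set.eq_empty_or_nonempty Aᶜ with hc | hc
      · have hAu : A = Set.univ := by rw [← Set.compl_empty_iff]; exact hc
        subst hAu
        have : pid (Set.univ : Set (Fin n)) = 1 := by
          ext x; rw [pid_apply, if_pos (Set.mem_univ _), one_apply]
        rw [this]; exact h1
      · obtain ⟨i, hiA⟩ := hc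
        have hstep := pid_insert_step A i hiA
        have hins : (insert i A)ᶜ.ncard ≤ k := by
          have : (insert i A)ᶜ = Aᶜ \ {i} := by
            ext z; simp [Set.mem_compl_iff, Set.mem_insert_iff, and_comm]
          rw [this]
          have := Set.ncard_diff_singleton_lt_of_mem hiA (Set.toFinite _)
          omega
        rw [hstep]
        exact hmul _ (ih _ hins) _ (hpid i)
  exact key (Aᶜ.ncard) A le_rfl

lemma eq_pid_of_msr_zero {α : PT n} (hα : α ∈ IC n) (h0 : msr α = 0) :
    α = pid (pdom α) := by
  have hterm : ∀ x : Fin n, ((x : ℕ) - ((α x).map Fin.val).getD (x : ℕ)) = 0 := by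
    intro x
    have := Finset.sum_eq_zero_iff.1 h0 x (Finset.mem_univ x)
    exact this
  ext x
  rw [pid_apply]
  rcases hx : α x with _ | w
  · rw [if_neg]
    intro ⟨y, hy⟩
    rw [hx] at hy; cases hy
  · have hw : (w : ℕ) ≤ (x : ℕ) := Fin.le_def.1 (hα.2 x w hx)
    have ht := hterm x
    rw [hx] at ht
    simp only [Option.map_some, Option.getD_some] at ht
    have : w = x := Fin.ext (by omega)
    subst this
    rw [if_pos ⟨w, hx⟩]

lemma factor_step {α : PT n} (hα : α ∈ IC n) (h0 : msr α ≠ 0) :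
    ∃ β ∈ IC n, ∃ (j : Fin n) (hj : (j : ℕ) + 1 < n),
      β * eMap j hj = α ∧ msr β < msr α := by
  classical
  -- find the maximal moved point
  set S : Finset (Fin n) := Finset.univ.filter (fun z => ∃ w, α z = some w ∧ w ≠ z) with hS
  have hSne : S.Nonempty := by
    by_contra hc
    apply h0
    refine Finset.sum_eq_zero ?_
    intro z _
    rcases hz : α z with _ | w
    · simp
    · simp only [Option.map_some, Option.getD_some]
      have hwz : w = z := by
        by_contra hne
        exact hc ⟨z, by simp [hS]; exact ⟨w, hz, hne⟩⟩
      subst hwz; omega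
  set x := S.max' hSne with hx
  have hxS : x ∈ S := S.max'_mem hSne
  have hxmax : ∀ z ∈ S, z ≤ x := fun z hz => S.le_max' z hz
  obtain ⟨j, hαx, hjx⟩ : ∃ w, α x = some w ∧ w ≠ x := by
    simpa [hS] using hxS
  have hjltx : (j : ℕ) < (x : ℕ) := by
    have := Fin.le_def.1 (hα.2 x j hαx)
    have : (j : ℕ) ≠ (x : ℕ) := fun hc => hjx (Fin.ext hc)
    omega
  have hj : (j : ℕ) + 1 < n := by
    have := x.isLt; omega
  -- j+1 not in the image of α
  have him : ∀ y w : Fin n, α y = some w → (w : ℕ) ≠ (j : ℕ) + 1 := by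
    intro y w hy hc
    rcases lt_trichotomy (y : ℕ) (x : ℕ) with hlt | heq | hgt
    · -- isotone: w ≤ j
      have := Fin.le_def.1 (hα.1 y x w j hy hαx (Fin.le_def.2 (le_of_lt hlt)))
      omega
    · have : y = x := Fin.ext heq
      subst this
      rw [hαx] at hy
      rw [Option.some_inj] at hy
      subst hy
      omega
    · -- y > x : y ∉ S so w = y. But then y = j+1 ≤ x, contra
      have hwy : w = y := by
        by_contra hne
        have : y ∈ S := by simp [hS]; exact ⟨w, hy, hne⟩
        have := Fin.le_def.1 (hxmax y this)
        omega
      subst hwy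
      omega
  set j1 : Fin n := ⟨(j : ℕ) + 1, hj⟩ with hj1
  have hj1v : (j1 : ℕ) = (j : ℕ) + 1 := rfl
  set β := α.trans (eMap j hj).symm with hβ
  have hβx : β x = some j1 := by
    rw [hβ]
    show (α x).bind (eMap j hj).symm = some j1
    rw [hαx]
    rw [Option.bind_some]
    rw [esymm_apply, if_neg (by omega), if_pos rfl]
  have hβne : ∀ z : Fin n, z ≠ x → β z = α z := by
    intro z hz
    rw [hβ]
    show (α z).bind (eMap j hj).symm = α z
    rcases hzv : α z with _ | u
    · rfl
    · rw [Option.bind_some]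
      have hu1 : u ≠ j := by
        intro hc; subst hc
        exact hz (pt_inj hzv hαx)
      have hu2 : (u : ℕ) ≠ (j : ℕ) + 1 := him z u hzv
      rw [esymm_apply, if_neg hu2, if_neg (by
        intro hc; exact hu1 (Fin.ext hc))]
  have hβIC : β ∈ IC n := by
    constructor
    · intro z₁ z₂ y₁ y₂ h1 h2 hle
      by_cases hz12 : z₁ = z₂
      · subst hz12; rw [h1] at h2; rw [Option.some_inj] at h2; subst h2; exact le_rfl
      have hzlt : (z₁ : ℕ) < (z₂ : ℕ) :=
        lt_of_le_of_ne (Fin.le_def.1 hle) (fun hc => hz12 (Fin.ext hc))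
      by_cases hz1 : z₁ = x
      · subst hz1
        rw [hβx] at h1; rw [Option.some_inj] at h1; subst h1
        have hz2 : z₂ ≠ x := fun hc => hz12 hc.symm
        rw [hβne z₂ hz2] at h2
        have hj2 : (j : ℕ) ≤ (y₂ : ℕ) :=
          Fin.le_def.1 (hα.1 x z₂ j y₂ hαx h2 hle)
        have hne1 : y₂ ≠ j := fun hc => hz2 (by subst hc; exact pt_inj h2 hαx)
        have hne2 : (y₂ : ℕ) ≠ (j : ℕ) + 1 := him z₂ y₂ h2
        rw [Fin.le_def]
        have : (y₂ : ℕ) ≠ (j : ℕ) := fun hc => hne1 (Fin.ext hc)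
        omega
      · rw [hβne z₁ hz1] at h1
        by_cases hz2 : z₂ = x
        · subst hz2
          rw [hβx] at h2; rw [Option.some_inj] at h2; subst h2
          have : (y₁ : ℕ) ≤ (j : ℕ) := Fin.le_def.1 (hα.1 z₁ x y₁ j h1 hαx hle)
          rw [Fin.le_def]
          omega
        · rw [hβne z₂ hz2] at h2
          exact hα.1 z₁ z₂ y₁ y₂ h1 h2 hle
    · intro z y hzy
      by_cases hz : z = x
      · subst hz
        rw [hβx] at hzy; rw [Option.some_inj] at hzy; subst hzy
        rw [Fin.le_def]
        omega
      · rw [hβne z hz] at hzy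
        exact hα.2 z y hzy
  refine ⟨β, hβIC, j, hj, ?_, ?_⟩
  · ext z
    rw [mul_apply]
    by_cases hz : z = x
    · subst hz
      rw [hβx]
      rw [Option.bind_some]
      rw [e_apply, if_neg (by rw [hj1v]; omega), if_pos hj1v, hαx]
    · rw [hβne z hz]
      rcases hzv : α z with _ | u
      · rfl
      · rw [Option.bind_some]
        have hu1 : u ≠ j := by
          intro hc; subst hc
          exact hz (pt_inj hzv hαx)
        have hu2 : (u : ℕ) ≠ (j : ℕ) + 1 := him z u hzv
        rw [e_apply, if_neg (fun hc => hu1 (Fin.ext hc)), if_neg hu2]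
  · apply Finset.sum_lt_sum
    · intro z _
      by_cases hz : z = x
      · subst hz
        rw [hβx, hαx]
        simp only [Option.map_some, Option.getD_some]
        omega
      · rw [hβne z hz]
    · refine ⟨x, Finset.mem_univ x, ?_⟩
      rw [hβx, hαx]
      simp only [Option.map_some, Option.getD_some]
      omega

lemma gen_IC {T : Set (PT n)} (hmul : ∀ a ∈ T, ∀ b ∈ T, a * b ∈ T)
    (h1 : (1 : PT n) ∈ T) (hpid : ∀ i : Fin n, pid {i}ᶜ ∈ T)
    (he : ∀ (i : Fin n) (hi : (i : ℕ) + 1 < n), eMap i hi ∈ T) :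
    ∀ α ∈ IC n, α ∈ T := by
  suffices key : ∀ k : ℕ, ∀ α ∈ IC n, msr α ≤ k → α ∈ T by
    intro α hα; exact key (msr α) α hα le_rfl
  intro k
  induction k with
  | zero =>
    intro α hα hm
    have h0 : msr α = 0 := Nat.le_zero.1 hm
    rw [eq_pid_of_msr_zero hα h0]
    exact pid_mem_of_gens hmul h1 hpid _
  | succ k ih =>
    intro α hα hm
    by_cases h0 : msr α = 0
    · rw [eq_pid_of_msr_zero hα h0]
      exact pid_mem_of_gens hmul h1 hpid _
    · obtain ⟨β, hβIC, j, hj, hfac, hlt⟩ := factor_step hα h0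
      rw [← hfac]
      exact hmul _ (ih β hβIC (by omega)) _ (he j hj)

end Gen
section Main

variable {n : ℕ}

noncomputable instance : Finite (PT n) :=
  Finite.of_injective (fun f => (f : Fin n → Option (Fin n)))
    (fun _ _ h => PEquiv.ext (congrFun h))

/-- The property of `γ` from the statement. -/
def PGam (n : ℕ) (γ : PT n) : Prop :=
  γ = 1 ∨ (∃ i : Fin n, γ = pid {i}ᶜ) ∨
    (∃ i : Fin n, (i : ℕ) + 1 < n ∧ ∀ x : Fin n,
      γ x = if (x : ℕ) = (i : ℕ) then none
        else if (x : ℕ) = (i : ℕ) + 1 then some i else some x)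

lemma PGam_iff (γ : PT n) : PGam n γ ↔
    γ = 1 ∨ (∃ i : Fin n, γ = pid {i}ᶜ) ∨
      (∃ (i : Fin n) (hi : (i : ℕ) + 1 < n), γ = eMap i hi) := by
  unfold PGam
  refine or_congr Iff.rfl (or_congr Iff.rfl ?_)
  constructor
  · rintro ⟨i, hi, hform⟩
    exact ⟨i, hi, PEquiv.ext fun x => by rw [hform x, e_apply]⟩
  · rintro ⟨i, hi, rfl⟩
    exact ⟨i, hi, fun x => rfl⟩

lemma PGam_mem_IC {γ : PT n} (h : PGam n γ) : γ ∈ IC n := by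
  rw [PGam_iff] at h
  rcases h with rfl | ⟨i, rfl⟩ | ⟨i, hi, rfl⟩
  · exact one_mem_IC
  · exact pid_mem_IC _
  · exact e_mem_IC i hi

lemma irr_of_PGam {γ α β : PT n} (h : PGam n γ) (hα : α ∈ IC n) (hβ : β ∈ IC n)
    (hprod : α * β = γ) : α = γ ∨ β = γ := by
  rw [PGam_iff] at h
  rcases h with rfl | ⟨i, rfl⟩ | ⟨i, hi, rfl⟩
  · exact irr_one hα hβ hprod
  · exact irr_pid i hα hβ hprod
  · exact irr_e i hi hα hβ hprod

lemma subsgp_compl {γ : PT n} (h : PGam n γ) : IsSubsgp (IC n) (IC n \ {γ}) := by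
  constructor
  · exact Set.diff_subset
  · intro a ha b hb
    refine ⟨IC_mul ha.1 hb.1, ?_⟩
    intro hc
    rcases irr_of_PGam h ha.1 hb.1 hc with h' | h'
    · exact ha.2 h'
    · exact hb.2 h'

lemma max_of_PGam (hn : 0 < n) {γ : PT n} (h : PGam n γ) :
    IsMaxSubsgp (IC n) (IC n \ {γ}) := by
  refine ⟨subsgp_compl h, ?_, ?_, ?_⟩
  · -- nonempty
    have hne : (1 : PT n) ≠ (⊥ : PT n) := by
      intro hc
      have := congrFun (congrArg PEquiv.toFun hc) ⟨0, hn⟩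
      rw [show (1 : PT n).toFun ⟨0, hn⟩ = some ⟨0, hn⟩ from rfl,
        show (⊥ : PT n).toFun ⟨0, hn⟩ = none from rfl] at this
      cases this
    by_cases hγ : γ = 1
    · exact ⟨⊥, bot_mem_IC, by simp [hγ]; exact fun hc => hne hc.symm⟩
    · exact ⟨1, one_mem_IC, by simpa using fun hc => hγ hc.symm⟩
  · -- proper
    intro hc
    have hγIC : γ ∈ IC n := PGam_mem_IC h
    rw [← hc] at hγIC
    exact hγIC.2 rfl
  · -- maximal
    intro T hT hsub
    by_cases hγT : γ ∈ T
    · right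
      refine le_antisymm hT.1 ?_
      intro x hx
      by_cases hxγ : x = γ
      · subst hxγ; exact hγT
      · exact hsub ⟨hx, hxγ⟩
    · left
      refine le_antisymm ?_ hsub
      intro x hx
      exact ⟨hT.1 hx, fun hc => hγT (hc ▸ hx)⟩

lemma max_forward {M : Set (PT n)} (hM : IsMaxSubsgp (IC n) M) :
    ∃ γ : PT n, M = IC n \ {γ} ∧ PGam n γ := by
  by_cases hall : ∀ γ : PT n, PGam n γ → γ ∈ M
  · exfalso
    have hIC : ∀ α ∈ IC n, α ∈ M := by
      refine gen_IC hM.1.2 ?_ ?_ ?_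
      · exact hall 1 (Or.inl rfl)
      · exact fun i => hall _ (Or.inr (Or.inl ⟨i, rfl⟩))
      · exact fun i hi => hall _ (Or.inr (Or.inr ⟨i, hi, fun x => rfl⟩))
    exact hM.2.2.1 (le_antisymm hM.1.1 hIC)
  · push_neg at hall
    obtain ⟨γ, hγP, hγM⟩ := hall
    have hsub : M ⊆ IC n \ {γ} := by
      intro x hx
      exact ⟨hM.1.1 hx, fun hc => hγM (hc ▸ hx)⟩
    rcases hM.2.2.2 (IC n \ {γ}) (subsgp_compl hγP) hsub with hc | hc
    · exact ⟨γ, hc.symm, hγP⟩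
    · exfalso
      have : γ ∈ IC n \ {γ} := hc.symm ▸ PGam_mem_IC hγP
      exact this.2 rfl

end Main
section Count

variable {n : ℕ}

/-- The essential elements, indexed by `Fin (n-1)`. -/
noncomputable def EE (n : ℕ) (k : Fin (n - 1)) : PT n :=
  eMap ⟨(k : ℕ), by have := k.isLt; omega⟩
    (show (k : ℕ) + 1 < n from by have := k.isLt; omega)

lemma PGam_set_eq :
    {γ : PT n | PGam n γ} =
      {(1 : PT n)} ∪ Set.range (fun i : Fin n => pid {i}ᶜ) ∪ Set.range (EE n) := by
  ext γ
  simp only [Set.mem_setOf_eq, Set.mem_union, Set.mem_singleton_iff, Set.mem_range]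
  rw [PGam_iff]
  constructor
  · rintro (rfl | ⟨i, rfl⟩ | ⟨i, hi, rfl⟩)
    · exact Or.inl (Or.inl rfl)
    · exact Or.inl (Or.inr ⟨i, rfl⟩)
    · exact Or.inr ⟨⟨(i : ℕ), by omega⟩, rfl⟩
  · rintro ((rfl | ⟨i, rfl⟩) | ⟨k, rfl⟩)
    · exact Or.inl rfl
    · exact Or.inr (Or.inl ⟨i, rfl⟩)
    · exact Or.inr (Or.inr ⟨_, _, rfl⟩)

lemma pid_apply_self (i : Fin n) : pid {i}ᶜ i = none := by
  rw [pid_apply, if_neg (by simp)]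

lemma one_ne_pid (i : Fin n) : (1 : PT n) ≠ pid {i}ᶜ := by
  intro hc
  have := DFunLike.congr_fun hc i
  rw [one_apply, pid_apply_self] at this
  cases this

lemma e_apply_self (i : Fin n) (hi : (i : ℕ) + 1 < n) : eMap i hi i = none := by
  rw [e_apply, if_pos rfl]

lemma e_apply_succ (i : Fin n) (hi : (i : ℕ) + 1 < n) :
    eMap i hi ⟨(i : ℕ) + 1, hi⟩ = some i := by
  rw [e_apply, if_neg (by simp), if_pos (by simp)]

lemma one_ne_e (i : Fin n) (hi : (i : ℕ) + 1 < n) : (1 : PT n) ≠ eMap i hi := by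
  intro hc
  have := DFunLike.congr_fun hc i
  rw [one_apply, e_apply_self] at this
  cases this

lemma pid_ne_e (i j : Fin n) (hj : (j : ℕ) + 1 < n) : pid {i}ᶜ ≠ eMap j hj := by
  intro hc
  set p : Fin n := ⟨(j : ℕ) + 1, hj⟩ with hp
  have hthis := DFunLike.congr_fun hc p
  rw [e_apply_succ, pid_apply] at hthis
  split_ifs at hthis
  rw [Option.some_inj] at hthis
  have h2 : (p : ℕ) = (j : ℕ) := by rw [hthis]
  simp [hp] at h2

lemma pid_inj : Function.Injective (fun i : Fin n => pid {i}ᶜ) := by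
  intro i j hc
  by_contra hne
  have hthis := DFunLike.congr_fun hc i
  rw [pid_apply_self, pid_apply, if_pos (by simpa using hne)] at hthis
  cases hthis

lemma EE_inj : Function.Injective (EE n) := by
  intro k l hc
  unfold EE at hc
  by_contra hne
  have hkl : (k : ℕ) ≠ (l : ℕ) := fun hc' => hne (Fin.ext hc')
  have hthis := DFunLike.congr_fun hc (⟨(k : ℕ), by have := k.isLt; omega⟩ : Fin n)
  rw [e_apply_self, e_apply] at hthis
  simp only [] at hthis
  rw [if_neg hkl] at hthis
  split_ifs at hthis

lemma ncard_PGam (hn : 0 < n) : {γ : PT n | PGam n γ}.ncard = 2 * n := by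
  rw [PGam_set_eq]
  have h1 : ¬ (1 : PT n) ∈ Set.range (fun i : Fin n => pid {i}ᶜ) := by
    rintro ⟨i, hc⟩; exact one_ne_pid i hc.symm
  have h2 : Disjoint ({(1 : PT n)} ∪ Set.range (fun i : Fin n => pid {i}ᶜ))
      (Set.range (EE n)) := by
    rw [Set.disjoint_left]
    rintro γ (rfl | ⟨i, rfl⟩) ⟨k, hk⟩
    · exact one_ne_e _ _ hk.symm
    · exact pid_ne_e i _ _ hk.symm
  have h3 : Disjoint ({(1 : PT n)} : Set (PT n)) (Set.range (fun i : Fin n => pid {i}ᶜ)) := by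
    rw [Set.disjoint_left]
    rintro γ rfl hγ
    exact h1 hγ
  rw [Set.ncard_union_eq h2, Set.ncard_union_eq h3, Set.ncard_singleton]
  have hr1 : (Set.range (fun i : Fin n => pid {i}ᶜ)).ncard = n := by
    rw [← Nat.card_coe_set_eq, Nat.card_range_of_injective pid_inj, Nat.card_eq_fintype_card,
      Fintype.card_fin]
  have hr2 : (Set.range (EE n)).ncard = n - 1 := by
    rw [← Nat.card_coe_set_eq, Nat.card_range_of_injective EE_inj, Nat.card_eq_fintype_card,
      Fintype.card_fin]
  rw [hr1, hr2]
  omega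

lemma compl_injOn : Set.InjOn (fun γ : PT n => IC n \ {γ}) {γ : PT n | PGam n γ} := by
  intro γ hγ γ' hγ' hc
  by_contra hne
  have hγIC : γ ∈ IC n := PGam_mem_IC hγ
  have hc' : IC n \ {γ} = IC n \ {γ'} := hc
  have : γ ∈ IC n \ {γ'} := ⟨hγIC, hne⟩
  rw [← hc'] at this
  exact this.2 rfl

end Count
/-- the maximal subsemigroups of `IC_n` are exactly the sets `IC_n \ {γ}`
where `γ` is the identity, a partial identity on the complement of a point, or an
essential element `ε_{i,i+1}` (domain `[n] \ {i}`, sending `i+1` to `i` and fixing the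
rest); consequently `IC_n` has exactly `2n` maximal subsemigroups. -/
theorem stmt8 (n : ℕ) (hn : 0 < n) :
    (∀ M : Set (PT n), IsMaxSubsgp (IC n) M ↔
      ∃ γ : PT n, M = IC n \ {γ} ∧
        (γ = 1 ∨
         (∃ i : Fin n, γ = pid {i}ᶜ) ∨
         (∃ i : Fin n, (i : ℕ) + 1 < n ∧ ∀ x : Fin n,
            γ x = if (x : ℕ) = (i : ℕ) then none
              else if (x : ℕ) = (i : ℕ) + 1 then some i else some x))) ∧
    {M : Set (PT n) | IsMaxSubsgp (IC n) M}.ncard = 2 * n := by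
  constructor
  · intro M
    constructor
    · intro hM
      obtain ⟨γ, hMeq, hγ⟩ := max_forward hM
      exact ⟨γ, hMeq, hγ⟩
    · rintro ⟨γ, rfl, hγ⟩
      exact max_of_PGam hn hγ
  · have himg : {M : Set (PT n) | IsMaxSubsgp (IC n) M} =
        (fun γ : PT n => IC n \ {γ}) '' {γ : PT n | PGam n γ} := by
      ext M
      simp only [Set.mem_setOf_eq, Set.mem_image]
      constructor
      · intro hM
        obtain ⟨γ, hMeq, hγ⟩ := max_forward hM
        exact ⟨γ, hγ, hMeq.symm⟩
      · rintro ⟨γ, hγ, rfl⟩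
        exact max_of_PGam hn hγ
    rw [himg, Set.ncard_image_of_injOn compl_injOn, ncard_PGam hn]

end ICCatalan
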